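/- For y > 0 let a₀(y) = (√(y+1)−1)²/y, a₂(y) = y^{3/2}/(√(y+1)(√(y+1)−1)²)·( (1/(4πc₊))·(1−2√(y+1))/(y+1)·L² − j ), and F₃(y) = (2c₊j/π)√(1+y) − (1/48)log(1+y) + ((2c₊j/π) + L²/(2π²) + 1/24)·log(√(1+y)−1), where c₊ > 0, L, j are real constants. Then, with y = (π²/c₊²)xt, the identity (y/x)²·F₃''(y) − (t^{1/2}/(2x^{3/2}))·a₂(y) = y²(−3y + 2√(y+1) − 3)/(96 x² (y+1)^{5/2} (√(y+1)−1)²) holds, and the function y ↦ y²(−3y+2√(y+1)−3)/((y+1)^{5/2}(√(y+1)−1)²) is bounded on (0,∞). -/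

import Mathlib

open Real

lemma hasDerivAt_F (A B z : ℝ) (hz : 0 < z) :
    HasDerivAt (fun w => A * Real.sqrt (1+w) - (1/48) * Real.log (1+w)
      + B * Real.log (Real.sqrt (1+w) - 1))
      (A * (1/(2*Real.sqrt (1+z))) - (1/48) * (1/(1+z))
        + B * ((1/(2*Real.sqrt (1+z))) / (Real.sqrt (1+z) - 1))) z := by
  have h1z : (0:ℝ) < 1 + z := by linarith
  have hs1 : 1 < Real.sqrt (1+z) := by
    rw [show (1:ℝ) = Real.sqrt 1 by simp]
    exact Real.sqrt_lt_sqrt (by norm_num) (by simp; linarith)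
  have hlin : HasDerivAt (fun w : ℝ => 1 + w) 1 z := by
    simpa using (hasDerivAt_id z).const_add 1
  have hsq : HasDerivAt (fun w => Real.sqrt (1+w)) (1/(2*Real.sqrt (1+z))) z := by
    have := (Real.hasDerivAt_sqrt (ne_of_gt h1z)).comp z hlin
    simpa [Function.comp_def] using this
  have t1 := hsq.const_mul A
  have t2 := (hlin.log (ne_of_gt h1z)).const_mul (1/48 : ℝ)
  have t3 := ((hsq.sub_const 1).log (ne_of_gt (by linarith))).const_mul B
  have := (t1.sub t2).add t3
  exact this


lemma hasDerivAt_g (A B z : ℝ) (hz : 0 < z) :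
    HasDerivAt (fun w => A * (1/(2*Real.sqrt (1+w))) - (1/48) * (1/(1+w))
        + B * ((1/(2*Real.sqrt (1+w))) / (Real.sqrt (1+w) - 1)))
      (-A/(4*(Real.sqrt (1+z))^3) + 1/(48*(1+z)^2)
        - B*(2*Real.sqrt (1+z)-1)/(4*(Real.sqrt (1+z))^3*(Real.sqrt (1+z)-1)^2)) z := by
  have h1z : (0:ℝ) < 1 + z := by linarith
  have hs1 : 1 < Real.sqrt (1+z) := by
    rw [show (1:ℝ) = Real.sqrt 1 by simp]
    exact Real.sqrt_lt_sqrt (by norm_num) (by simp; linarith)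
  have hs0 : Real.sqrt (1+z) ≠ 0 := by linarith
  have hsm : Real.sqrt (1+z) - 1 ≠ 0 := by linarith
  have h2s : (2*Real.sqrt (1+z)) ≠ 0 := by positivity
  have hlin : HasDerivAt (fun w : ℝ => 1 + w) 1 z := by
    simpa using (hasDerivAt_id z).const_add 1
  have hsq : HasDerivAt (fun w => Real.sqrt (1+w)) (1/(2*Real.sqrt (1+z))) z := by
    have := (Real.hasDerivAt_sqrt (ne_of_gt h1z)).comp z hlin
    simpa [Function.comp_def] using this
  have hu := (hasDerivAt_const z (1:ℝ)).div (hsq.const_mul 2) h2s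
  have hA := hu.const_mul A
  have hv := ((hasDerivAt_const z (1:ℝ)).div hlin (ne_of_gt h1z)).const_mul (1/48 : ℝ)
  have hw := (hu.div (hsq.sub_const 1) hsm).const_mul B
  have h := (hA.sub hv).add hw
  refine h.congr_deriv ?_
  simp only [Pi.div_apply]
  field_simp
  ring

lemma second_deriv (A B y : ℝ) (hy : 0 < y) :
    deriv (deriv (fun z => A * Real.sqrt (1+z) - (1/48) * Real.log (1+z)
      + B * Real.log (Real.sqrt (1+z) - 1))) y
    = -A/(4*(Real.sqrt (1+y))^3) + 1/(48*(1+y)^2)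
        - B*(2*Real.sqrt (1+y)-1)/(4*(Real.sqrt (1+y))^3*(Real.sqrt (1+y)-1)^2) := by
  have hev : deriv (fun z => A * Real.sqrt (1+z) - (1/48) * Real.log (1+z)
      + B * Real.log (Real.sqrt (1+z) - 1)) =ᶠ[nhds y]
      (fun z => A * (1/(2*Real.sqrt (1+z))) - (1/48) * (1/(1+z))
        + B * ((1/(2*Real.sqrt (1+z))) / (Real.sqrt (1+z) - 1))) := by
    filter_upwards [Ioi_mem_nhds hy] with z hz
    exact (hasDerivAt_F A B z hz).deriv
  rw [hev.deriv_eq]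
  exact (hasDerivAt_g A B y hy).deriv

set_option maxHeartbeats 2000000 in
theorem stmt15 (cplus L j : ℝ) (hc : 0 < cplus) :
    let F₃ : ℝ → ℝ := fun y => (2*cplus*j/Real.pi) * Real.sqrt (1+y)
      - (1/48) * Real.log (1+y)
      + ((2*cplus*j/Real.pi) + L^2/(2*Real.pi^2) + 1/24) * Real.log (Real.sqrt (1+y) - 1)
    let a₂ : ℝ → ℝ := fun y => y^((3:ℝ)/2) / (Real.sqrt (y+1) * (Real.sqrt (y+1) - 1)^2) *
      ((1/(4*Real.pi*cplus)) * (1 - 2*Real.sqrt (y+1)) / (y+1) * L^2 - j)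
    (∀ x t : ℝ, 0 < x → 0 < t →
      let y := Real.pi^2 * x * t / cplus^2
      (y/x)^2 * deriv (deriv F₃) y - t^((1:ℝ)/2) / (2 * x^((3:ℝ)/2)) * a₂ y
        = y^2 * (-3*y + 2*Real.sqrt (y+1) - 3)
          / (96 * x^2 * (y+1)^((5:ℝ)/2) * (Real.sqrt (y+1) - 1)^2)) ∧
    ∃ C, ∀ y > (0:ℝ),
      |y^2 * (-3*y + 2*Real.sqrt (y+1) - 3)
        / ((y+1)^((5:ℝ)/2) * (Real.sqrt (y+1) - 1)^2)| ≤ C := by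
  have pi0 := Real.pi_pos
  intro F₃ a₂
  constructor
  · intro x t hx ht
    intro y
    have hy : y = Real.pi^2 * x * t / cplus^2 := rfl
    have hy0 : 0 < y := by rw [hy]; positivity
    have h1y : (0:ℝ) < 1 + y := by linarith
    have hd2 : deriv (deriv F₃) y
        = -(2*cplus*j/Real.pi)/(4*(Real.sqrt (1+y))^3) + 1/(48*(1+y)^2)
          - ((2*cplus*j/Real.pi) + L^2/(2*Real.pi^2) + 1/24)*(2*Real.sqrt (1+y)-1)
            /(4*(Real.sqrt (1+y))^3*(Real.sqrt (1+y)-1)^2) :=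
      second_deriv (2*cplus*j/Real.pi) ((2*cplus*j/Real.pi) + L^2/(2*Real.pi^2) + 1/24) y hy0
    have ha : a₂ y = y^((3:ℝ)/2) / (Real.sqrt (y+1) * (Real.sqrt (y+1) - 1)^2) *
      ((1/(4*Real.pi*cplus)) * (1 - 2*Real.sqrt (y+1)) / (y+1) * L^2 - j) := rfl
    rw [ha, hd2]
    -- rpow handling
    have hx32 : x^((3:ℝ)/2) ≠ 0 := by positivity
    have hy32 : y^((3:ℝ)/2) ≠ 0 := by positivity
    have e3 : y^((3:ℝ)/2) = y * Real.sqrt y := by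
      rw [show (3:ℝ)/2 = 1 + 1/2 by norm_num, Real.rpow_add hy0, Real.rpow_one,
        ← Real.sqrt_eq_rpow]
    have e3x : x^((3:ℝ)/2) = x * Real.sqrt x := by
      rw [show (3:ℝ)/2 = 1 + 1/2 by norm_num, Real.rpow_add hx, Real.rpow_one,
        ← Real.sqrt_eq_rpow]
    have e1 : t^((1:ℝ)/2) = Real.sqrt t := by rw [← Real.sqrt_eq_rpow]
    have hsy : Real.sqrt y = Real.pi * Real.sqrt x * Real.sqrt t / cplus := by
      rw [hy, show Real.pi^2*x*t/cplus^2 = (Real.pi*Real.sqrt x*Real.sqrt t/cplus)^2 by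
        rw [div_pow, mul_pow, mul_pow, Real.sq_sqrt hx.le, Real.sq_sqrt ht.le]]
      exact Real.sqrt_sq (by positivity)
    have hpow : t^((1:ℝ)/2) * y^((3:ℝ)/2) / x^((3:ℝ)/2) = cplus * y^2/(Real.pi*x^2) := by
      rw [e1, e3, e3x, hsy, hy]
      have hst2 : Real.sqrt t * Real.sqrt t = t := Real.mul_self_sqrt ht.le
      have hsx2 : Real.sqrt x * Real.sqrt x = x := Real.mul_self_sqrt hx.le
      set st := Real.sqrt t with hstdef
      set sx := Real.sqrt x with hsxdef
      rw [← hst2, ← hsx2]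
      have hst0 : st ≠ 0 := by positivity
      have hsx0 : sx ≠ 0 := by positivity
      field_simp
    have hT12 : t^((1:ℝ)/2) = cplus * y^2/(Real.pi*x^2) * x^((3:ℝ)/2) / y^((3:ℝ)/2) := by
      rw [← hpow]; field_simp
    rw [hT12]
    -- normalize sqrt (y+1) to sqrt (1+y)
    have hss' : Real.sqrt (y+1) = Real.sqrt (1+y) := by rw [add_comm]
    rw [hss']
    have h52 : (y+1)^((5:ℝ)/2) = (Real.sqrt (1+y))^5 := by
      rw [add_comm, Real.sqrt_eq_rpow, ← Real.rpow_natCast ((1+y) ^ ((1:ℝ)/2)) 5,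
        ← Real.rpow_mul h1y.le]
      norm_num
    rw [h52]
    have hs1 : 1 < Real.sqrt (1+y) := by
      nlinarith [Real.sq_sqrt h1y.le, Real.sqrt_nonneg (1+y)]
    set s := Real.sqrt (1+y) with hsdef
    have hy2 : y = s^2 - 1 := by rw [hsdef, Real.sq_sqrt h1y.le]; ring
    have hs0 : s ≠ 0 := by linarith
    have hsm : s - 1 ≠ 0 := by linarith
    have hπ : Real.pi ≠ 0 := ne_of_gt pi0
    have hx0 : x ≠ 0 := ne_of_gt hx
    have hc0 : cplus ≠ 0 := ne_of_gt hc
    field_simp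
    rw [hy2]
    ring
  · refine ⟨20, fun y hy => ?_⟩
    have h1y : (0:ℝ) < y + 1 := by linarith
    have hs1 : 1 < Real.sqrt (y+1) := by
      nlinarith [Real.sq_sqrt h1y.le, Real.sqrt_nonneg (y+1)]
    have h52 : (y+1)^((5:ℝ)/2) = (Real.sqrt (y+1))^5 := by
      rw [Real.sqrt_eq_rpow, ← Real.rpow_natCast ((y+1) ^ ((1:ℝ)/2)) 5,
        ← Real.rpow_mul h1y.le]
      norm_num
    set s := Real.sqrt (y+1) with hsdef
    have hy2 : y = s^2 - 1 := by rw [hsdef, Real.sq_sqrt h1y.le]; ring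
    have hs0 : (0:ℝ) < s := by linarith
    have hsm : s - 1 ≠ 0 := by linarith
    have e : y^2 * (-3*y + 2*s - 3) / ((y+1)^((5:ℝ)/2) * (s - 1)^2)
        = (s+1)^2*(2-3*s)/s^4 := by
      rw [h52, hy2]
      field_simp
      ring
    rw [e, abs_div, abs_of_pos (by positivity : (0:ℝ) < s^4),
      div_le_iff₀ (by positivity : (0:ℝ) < s^4)]
    have habs : |(s+1)^2*(2-3*s)| = (s+1)^2*(3*s-2) := by
      rw [abs_mul, abs_of_nonneg (by positivity), abs_of_nonpos (by linarith)]
      ring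
    rw [habs]
    nlinarith [sq_nonneg (s-1), sq_nonneg (s+1), sq_nonneg s, mul_pos hs0 hs0,
      pow_le_pow_right₀ hs1.le (by norm_num : 3 ≤ 4)]
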